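/- Let N be a positive integer, let k and r be natural numbers, and let A be an r × k integer matrix such that the subgroup of ℤ^k generated by the rows of A contains N·ℤ^k. Then the number of vectors x ∈ (ℤ/Nℤ)^k satisfying A·x = 0 in (ℤ/Nℤ)^r equals the index of the row span of A in ℤ^k, i.e., the cardinality of the quotient group ℤ^k / R(A), where R(A) is the subgroup of ℤ^k generated by the rows of A. -/

import Mathlib

/-- The number of additive homs `ZMod m →+ ZMod N` is `m` when `m ∣ N`. -/
lemma aux_card_hom_zmod (m N : ℕ) (hN : 0 < N) (hmN : m ∣ N) :
    Nat.card (ZMod m →+ ZMod N) = m := by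
  have : NeZero N := ⟨hN.ne'⟩
  obtain ⟨c, hc⟩ := hmN
  have hm : 0 < m := Nat.pos_of_ne_zero (by rintro rfl; rw [zero_mul] at hc; exact hN.ne' hc)
  have hc0 : 0 < c := Nat.pos_of_ne_zero (by rintro rfl; rw [mul_zero] at hc; exact hN.ne' hc)
  have : NeZero m := ⟨hm.ne'⟩
  -- homs correspond to `m`-torsion elements of `ZMod N`
  have e1 : (ZMod m →+ ZMod N) ≃ {f : ℤ →+ ZMod N // f (m : ℤ) = 0} := (ZMod.lift m).symm
  have e2 : {f : ℤ →+ ZMod N // f (m : ℤ) = 0} ≃ {a : ZMod N // (m : ℤ) • a = 0} :=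
    (Equiv.subtypeEquiv (zmultiplesHom (ZMod N)) (fun a => by
      simp [zmultiplesHom_apply])).symm
  have e3 : {a : ZMod N // (m : ℤ) • a = 0} ≃ {a : ZMod N // c ∣ a.val} := by
    refine Equiv.subtypeEquivRight (fun a => ?_)
    have h1 : (m : ℤ) • a = ((m * a.val : ℕ) : ZMod N) := by
      push_cast
      rw [zsmul_eq_mul]
      congr 1
      · push_cast; ring
      · exact (ZMod.natCast_rightInverse a).symm
    rw [h1, ZMod.natCast_eq_zero_iff]
    generalize a.val = t
    rw [hc]
    exact Nat.mul_dvd_mul_iff_left hm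
  have e4 : {a : ZMod N // c ∣ a.val} ≃ ZMod m := by
    refine ⟨fun a => ((a.1.val / c : ℕ) : ZMod m), fun b => ⟨((b.val * c : ℕ) : ZMod N), ?_⟩,
      ?_, ?_⟩
    · have hlt : b.val * c < N := by
        have := ZMod.val_lt b
        calc b.val * c < m * c := (Nat.mul_lt_mul_right hc0).mpr this
        _ = N := hc.symm
      rw [ZMod.val_cast_of_lt hlt]
      exact dvd_mul_left c b.val
    · rintro ⟨a, ha⟩
      have hlt : a.val / c < m := by
        rw [Nat.div_lt_iff_lt_mul hc0]
        calc a.val < N := ZMod.val_lt a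
        _ = m * c := hc
      ext
      simp only
      rw [ZMod.val_cast_of_lt hlt, Nat.div_mul_cancel ha]
      exact ZMod.natCast_rightInverse a
    · intro b
      have hlt : b.val * c < N := by
        have := ZMod.val_lt b
        calc b.val * c < m * c := (Nat.mul_lt_mul_right hc0).mpr this
        _ = N := hc.symm
      simp only
      rw [ZMod.val_cast_of_lt hlt, Nat.mul_div_cancel _ hc0]
      exact ZMod.natCast_rightInverse b
  rw [Nat.card_congr ((e1.trans e2).trans (e3.trans e4)), Nat.card_zmod]

/-- For a finite abelian group `Q` that is `N`-torsion, the number of homs to `ZMod N`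
equals the cardinality of `Q`. -/
lemma aux_card_hom_eq_card (Q : Type*) [AddCommGroup Q] [Finite Q] (N : ℕ) (hN : 0 < N)
    (h : ∀ q : Q, N • q = 0) : Nat.card (Q →+ ZMod N) = Nat.card Q := by
  classical
  obtain ⟨ι, _, p, hp, e, ⟨eq⟩⟩ := AddCommGroup.equiv_directSum_zmod_of_finite Q
  set n : ι → ℕ := fun i => p i ^ e i with hn
  -- direct sum to Pi
  have epi : (DirectSum ι fun i => ZMod (n i)) ≃+ ∀ i, ZMod (n i) :=
    AddEquiv.mk' DFinsupp.equivFunOnFintype (fun f g => rfl)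
  have E : Q ≃+ ∀ i, ZMod (n i) := eq.trans epi
  have hdvd : ∀ i, n i ∣ N := by
    intro i
    have h1 : N • (1 : ZMod (n i)) = 0 := by
      have h2 := h (E.symm (Pi.single i (1 : ZMod (n i))))
      have h3 : N • (Pi.single i (1 : ZMod (n i)) : ∀ j, ZMod (n j)) = (0 : ∀ j, ZMod (n j)) := by
        have := congrArg E h2
        rwa [map_nsmul, AddEquiv.apply_symm_apply, map_zero] at this
      have := congrFun h3 i
      simpa using this
    rwa [nsmul_eq_mul, mul_one, ZMod.natCast_eq_zero_iff] at h1
  have step1 : Nat.card (Q →+ ZMod N) = Nat.card ((∀ i, ZMod (n i)) →+ ZMod N) :=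
    Nat.card_congr (AddEquiv.addMonoidHomCongrLeftEquiv E)
  have step2 : Nat.card ((∀ i, ZMod (n i)) →+ ZMod N)
      = Nat.card (∀ i, ZMod (n i) →+ ZMod N) :=
    Nat.card_congr (Pi.addMonoidHomAddEquiv (fun i => ZMod (n i)) (ZMod N)).toEquiv
  rw [step1, step2, Nat.card_pi, Nat.card_congr E.toEquiv, Nat.card_pi]
  refine Finset.prod_congr rfl (fun i _ => ?_)
  rw [aux_card_hom_zmod (n i) N hN (hdvd i), Nat.card_zmod]

/-- Any additive hom `(Fin k → ℤ) →+ C` into a commutative ring `C` is given by its values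
on the standard basis vectors. -/
lemma aux_hom_eq_sum {k : ℕ} {C : Type*} [CommRing C] (φ : (Fin k → ℤ) →+ C)
    (v : Fin k → ℤ) : φ v = ∑ j, (v j : C) * φ (Pi.single j 1) := by
  conv_lhs => rw [← Finset.univ_sum_single v]
  rw [map_sum]
  refine Finset.sum_congr rfl (fun j _ => ?_)
  have h1 : Pi.single j (v j) = (v j) • (Pi.single j (1 : ℤ) : Fin k → ℤ) := by
    rw [← Pi.single_smul, smul_eq_mul, mul_one]
  rw [h1, map_zsmul, zsmul_eq_mul]

/-- If the row span `R(A)` of an integer matrix `A` contains `N·ℤ^k`, then the number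
of solutions `x ∈ (ℤ/Nℤ)^k` of `A·x = 0` equals the index of `R(A)` in `ℤ^k`. -/
theorem card_solutions_eq_index_row_span (N : ℕ) (hN : 0 < N) (k r : ℕ)
    (A : Matrix (Fin r) (Fin k) ℤ)
    (hNA : ∀ v : Fin k → ℤ, (N : ℤ) • v ∈ Submodule.span ℤ (Set.range A)) :
    Nat.card {x : Fin k → ZMod N //
        (A.map (Int.castRingHom (ZMod N))).mulVec x = 0} =
      Nat.card ((Fin k → ℤ) ⧸ Submodule.span ℤ (Set.range A)) := by
  classical
  set M : Submodule ℤ (Fin k → ℤ) := Submodule.span ℤ (Set.range A) with hM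
  -- the hom attached to x
  set phi : (Fin k → ZMod N) → ((Fin k → ℤ) →+ ZMod N) := fun x =>
    AddMonoidHom.mk' (fun v => ∑ j, (v j : ZMod N) * x j) (by
      intro v w
      simp only [Pi.add_apply, Int.cast_add, add_mul]
      rw [Finset.sum_add_distrib]) with hphi
  have phi_apply : ∀ x v, phi x v = ∑ j, (v j : ZMod N) * x j := fun _ _ => rfl
  have phi_single : ∀ (x : Fin k → ZMod N) (j : Fin k), phi x (Pi.single j 1) = x j := by
    intro x j
    rw [phi_apply]
    rw [Finset.sum_eq_single j]
    · simp
    · intro b _ hb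
      simp [Pi.single_apply, hb]
    · simp
  -- key: mulVec entries are `phi x` applied to rows
  have key : ∀ (x : Fin k → ZMod N) (i : Fin r),
      (A.map (Int.castRingHom (ZMod N))).mulVec x i = phi x (A i) := by
    intro x i
    simp [Matrix.mulVec, dotProduct, phi_apply, Matrix.map_apply]
  -- E1: solutions correspond to homs vanishing on M
  have E1 : {x : Fin k → ZMod N // (A.map (Int.castRingHom (ZMod N))).mulVec x = 0}
      ≃ {φ : (Fin k → ℤ) →+ ZMod N // ∀ v ∈ M, φ v = 0} := by
    refine ⟨fun x => ⟨phi x.1, ?_⟩, fun φ => ⟨fun j => φ.1 (Pi.single j 1), ?_⟩, ?_, ?_⟩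
    · intro v hv
      have hker : M ≤ LinearMap.ker (phi x.1).toIntLinearMap := by
        rw [hM, Submodule.span_le]
        rintro _ ⟨i, rfl⟩
        simp only [SetLike.mem_coe, LinearMap.mem_ker, AddMonoidHom.coe_toIntLinearMap]
        rw [← key x.1 i, x.2]
        rfl
      exact hker hv
    · funext i
      have hAi : (A i) ∈ M := by
        rw [hM]
        exact Submodule.subset_span ⟨i, rfl⟩
      have := φ.2 (A i) hAi
      rw [aux_hom_eq_sum φ.1 (A i)] at this
      simp only [Pi.zero_apply]
      rw [Matrix.mulVec]
      simpa [dotProduct, Matrix.map_apply] using this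
    · rintro ⟨x, hx⟩
      ext j
      exact phi_single x j
    · rintro ⟨φ, hφ⟩
      refine Subtype.ext (AddMonoidHom.ext fun v => ?_)
      exact (aux_hom_eq_sum φ v).symm
  -- E2: homs vanishing on M correspond to homs from the quotient
  have E2 : {φ : (Fin k → ℤ) →+ ZMod N // ∀ v ∈ M, φ v = 0}
      ≃ (((Fin k → ℤ) ⧸ M) →+ ZMod N) := by
    refine ⟨fun φ => (M.liftQ φ.1.toIntLinearMap (fun v hv => ?_)).toAddMonoidHom,
      fun ψ => ⟨ψ.comp M.mkQ.toAddMonoidHom, fun v hv => ?_⟩, ?_, ?_⟩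
    · simp only [LinearMap.mem_ker, AddMonoidHom.coe_toIntLinearMap]
      exact φ.2 v hv
    · simp only [AddMonoidHom.coe_comp, LinearMap.toAddMonoidHom_coe, Function.comp_apply,
        Submodule.mkQ_apply]
      rw [show (Submodule.Quotient.mk v : (Fin k → ℤ) ⧸ M) = 0 from
        (Submodule.Quotient.mk_eq_zero M).mpr hv, map_zero]
    · rintro ⟨φ, hφ⟩
      ext v
      simp [Submodule.liftQ_apply]
    · intro ψ
      ext q
      obtain ⟨v, rfl⟩ := Submodule.Quotient.mk_surjective M q
      simp [Submodule.liftQ_apply]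
  -- the quotient is finite and N-torsion
  have htor : ∀ q : (Fin k → ℤ) ⧸ M, N • q = 0 := by
    intro q
    obtain ⟨v, rfl⟩ := Submodule.Quotient.mk_surjective M q
    rw [← Submodule.Quotient.mk_smul, Submodule.Quotient.mk_eq_zero]
    have := hNA v
    rwa [natCast_zsmul] at this
  have hfg : AddGroup.FG ((Fin k → ℤ) ⧸ M) :=
    Module.Finite.iff_addGroup_fg.mp (Module.Finite.quotient ℤ M)
  have hfin : Finite ((Fin k → ℤ) ⧸ M) :=
    @AddCommGroup.finite_of_fg_torsion _ _ hfg
      (fun q => isOfFinAddOrder_iff_nsmul_eq_zero.mpr ⟨N, hN, htor q⟩)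
  rw [Nat.card_congr (E1.trans E2)]
  exact aux_card_hom_eq_card _ N hN htor
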